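/- Let Q0 be a finite nonempty type and C : Q0 → Q0 → ℤ a symmetric matrix with C i i = 2 for all i and C i j ≤ 0 for i ≠ j, with form (x, y) := Σ_{i,j} x i * C i j * y j. Let δ : Q0 → ℕ satisfy weak condition (∗) for C, and let d : Q0 → ℕ be such that supp d ∪ supp δ = Q0 and (d + n·δ, e_i) < 0 for every i ∈ Q0 and every n ∈ ℕ. Then for every real M > 0 and every real ε > 0 there exists N ∈ ℕ such that for all n ≥ N the following holds: for every decomposition d + n·δ = d^1 + … + d^k into nonzero dimension vectors with (d + n·δ, d + n·δ) − Σ_{j=1}^k (d^j, d^j) > −M, there exists an index j such that (d^j) i ≥ (n − ε·√n)·δ i for every i ∈ Q0, and moreover (δ, (d + n·δ) − d^j) = 0. -/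

import Mathlib

open Finset

/-- The bilinear form associated to an integer matrix `E`:
`⟨x, y⟩ = Σ_{i,j} x i * E i j * y j`. -/
def bform {Q0 : Type*} [Fintype Q0] (E : Q0 → Q0 → ℤ) (x y : Q0 → ℤ) : ℤ :=
  ∑ i, ∑ j, x i * E i j * y j

/-- A dimension vector `Q0 → ℕ` viewed as an integer vector. -/
def nvec {Q0 : Type*} (v : Q0 → ℕ) : Q0 → ℤ := fun i => (v i : ℤ)

namespace Decomp51

variable {Q0 : Type*} [Fintype Q0] [DecidableEq Q0]

def bformR (E : Q0 → Q0 → ℤ) (x y : Q0 → ℝ) : ℝ := ∑ i, ∑ j, x i * (E i j : ℝ) * y j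

lemma bform_cast (E : Q0 → Q0 → ℤ) (x y : Q0 → ℤ) :
    ((bform E x y : ℤ) : ℝ) = bformR E (fun i => (x i : ℝ)) (fun i => (y i : ℝ)) := by
  simp only [bform, bformR]
  push_cast
  rfl

lemma bform_single_right (E : Q0 → Q0 → ℤ) (x : Q0 → ℤ) (i : Q0) :
    bform E x (Pi.single i 1) = ∑ j, x j * E j i := by
  unfold bform
  apply Finset.sum_congr rfl
  intro j _
  rw [Finset.sum_eq_single i]
  · simp
  · intro b _ hb; simp [Pi.single_apply, hb]
  · simp

lemma bform_single_left (E : Q0 → Q0 → ℤ) (x : Q0 → ℤ) (i : Q0) :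
    bform E (Pi.single i 1) x = ∑ j, E i j * x j := by
  unfold bform
  rw [Finset.sum_eq_single i]
  · apply Finset.sum_congr rfl; intro j _; simp
  · intro b _ hb
    apply Finset.sum_eq_zero
    intro j _
    simp [Pi.single_apply, hb]
  · simp

lemma bformR_single_left (E : Q0 → Q0 → ℤ) (x : Q0 → ℝ) (i : Q0) :
    bformR E (Pi.single i 1) x = ∑ j, (E i j : ℝ) * x j := by
  unfold bformR
  rw [Finset.sum_eq_single i]
  · apply Finset.sum_congr rfl; intro j _; simp
  · intro b _ hb
    apply Finset.sum_eq_zero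
    intro j _
    simp [Pi.single_apply, hb]
  · simp

lemma bform_expand (E : Q0 → Q0 → ℤ) (v x : Q0 → ℤ) :
    bform E v x = ∑ i, bform E v (Pi.single i 1) * x i := by
  simp only [bform_single_right]
  unfold bform
  rw [Finset.sum_comm]
  apply Finset.sum_congr rfl
  intro i _
  rw [Finset.sum_mul]

lemma bform_symm (E : Q0 → Q0 → ℤ) (hs : ∀ i j, E i j = E j i) (x y : Q0 → ℤ) :
    bform E x y = bform E y x := by
  unfold bform
  rw [Finset.sum_comm]
  apply Finset.sum_congr rfl; intro i _
  apply Finset.sum_congr rfl; intro j _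
  rw [hs j i]; ring

lemma bformR_sub_right (E : Q0 → Q0 → ℤ) (x y z : Q0 → ℝ) :
    bformR E x (fun i => y i - z i) = bformR E x y - bformR E x z := by
  unfold bformR
  rw [← Finset.sum_sub_distrib]
  apply Finset.sum_congr rfl; intro i _
  rw [← Finset.sum_sub_distrib]
  apply Finset.sum_congr rfl; intro j _
  ring

lemma bformR_sum_left {k : ℕ} (E : Q0 → Q0 → ℤ) (f : Fin k → Q0 → ℝ) (y : Q0 → ℝ) :
    ∑ a, bformR E (f a) y = bformR E (fun i => ∑ a, f a i) y := by
  unfold bformR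
  rw [Finset.sum_comm]
  apply Finset.sum_congr rfl; intro i _
  rw [Finset.sum_comm]
  apply Finset.sum_congr rfl; intro j _
  rw [Finset.sum_mul, Finset.sum_mul]

lemma sum_nonpos_le {ι : Type*} [Fintype ι] [DecidableEq ι] (f : ι → ℝ) (hf : ∀ x, f x ≤ 0) (i : ι) :
    ∑ x, f x ≤ f i := by
  rw [← Finset.add_sum_erase _ f (Finset.mem_univ i)]
  have h : ∑ x ∈ (Finset.univ : Finset ι).erase i, f x ≤ 0 :=
    Finset.sum_nonpos (fun x _ => hf x)
  linarith

lemma sum_nonpos_le_pair {ι : Type*} [Fintype ι] [DecidableEq ι] (f : ι → ℝ)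
    (hf : ∀ x, f x ≤ 0) (i j : ι) (hij : i ≠ j) :
    ∑ x, f x ≤ f i + f j := by
  rw [← Finset.add_sum_erase _ f (Finset.mem_univ i)]
  have hj : j ∈ (Finset.univ : Finset ι).erase i := Finset.mem_erase.2 ⟨Ne.symm hij, Finset.mem_univ j⟩
  rw [← Finset.add_sum_erase _ f hj]
  have h : ∑ x ∈ ((Finset.univ : Finset ι).erase i).erase j, f x ≤ 0 :=
    Finset.sum_nonpos (fun x _ => hf x)
  linarith

lemma add_le_sum_pair {ι : Type*} [Fintype ι] [DecidableEq ι] (f : ι → ℝ)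
    (hf : ∀ x, 0 ≤ f x) (i j : ι) (hij : i ≠ j) :
    f i + f j ≤ ∑ x, f x := by
  rw [← Finset.add_sum_erase _ f (Finset.mem_univ i)]
  have hj : j ∈ (Finset.univ : Finset ι).erase i := Finset.mem_erase.2 ⟨Ne.symm hij, Finset.mem_univ j⟩
  rw [← Finset.add_sum_erase _ f hj]
  have h : (0:ℝ) ≤ ∑ x ∈ ((Finset.univ : Finset ι).erase i).erase j, f x :=
    Finset.sum_nonneg (fun x _ => hf x)
  linarith

lemma key_id (E : Q0 → Q0 → ℤ) (hs : ∀ i j, E i j = E j i) (hdiag : ∀ i, E i i = 2)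
    (θ t : Q0 → ℝ) (u : Q0 → ℝ) (hu : ∀ i, u i = t i * θ i) :
    bformR E u (fun i => θ i - u i)
      = (∑ i, t i * (1 - t i) * θ i * bformR E (Pi.single i 1) θ)
        + (1/2) * ∑ i, ∑ j,
            (if i = j then (0:ℝ) else (E i j : ℝ)) * θ i * θ j * (t i - t j)^2 := by
  classical
  set c : Q0 → Q0 → ℝ := fun i j => if i = j then (0:ℝ) else (E i j : ℝ) with hc
  have hcs : ∀ i j, c i j = c j i := by
    intro i j
    simp only [hc]
    by_cases h : i = j
    · simp [h]
    · rw [if_neg h, if_neg (Ne.symm h), hs]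
  -- swap lemma : the antisymmetric double sum vanishes
  have hswap : ∑ i, ∑ j, (1/2) * (c i j * θ i * θ j * (t i ^ 2 - t j ^ 2)) = 0 := by
    have h1 : ∑ i, ∑ j, (1/2) * (c i j * θ i * θ j * (t i ^ 2 - t j ^ 2))
        = ∑ j, ∑ i, (1/2) * (c i j * θ i * θ j * (t i ^ 2 - t j ^ 2)) := Finset.sum_comm
    have h2 : ∑ j, ∑ i, (1/2) * (c i j * θ i * θ j * (t i ^ 2 - t j ^ 2))
        = ∑ i, ∑ j, -((1/2) * (c i j * θ i * θ j * (t i ^ 2 - t j ^ 2))) := by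
      apply Finset.sum_congr rfl; intro i _
      apply Finset.sum_congr rfl; intro j _
      rw [hcs j i]; ring
    rw [h2, Finset.sum_comm] at h1
    simp only [Finset.sum_neg_distrib] at h1
    -- h1 : S = -S hopefully
    rw [Finset.sum_comm] at h1
    linarith [h1]
  -- expand term1
  have hterm1 : (∑ i, t i * (1 - t i) * θ i * bformR E (Pi.single i 1) θ)
      = ∑ i, ∑ j, t i * (1 - t i) * θ i * ((E i j : ℝ) * θ j) := by
    apply Finset.sum_congr rfl; intro i _
    rw [bformR_single_left, Finset.mul_sum]
  have hterm2 : (1/2) * ∑ i, ∑ j, c i j * θ i * θ j * (t i - t j)^2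
      = ∑ i, ∑ j, (1/2) * (c i j * θ i * θ j * (t i - t j)^2) := by
    rw [Finset.mul_sum]
    apply Finset.sum_congr rfl; intro i _
    rw [Finset.mul_sum]
  rw [hterm1, hterm2]
  unfold bformR
  rw [← sub_eq_zero, sub_add_eq_sub_sub]
  have hcomb : (∑ i, ∑ j, u i * (E i j:ℝ) * (θ j - u j))
      - (∑ i, ∑ j, t i * (1 - t i) * θ i * ((E i j : ℝ) * θ j))
        - ∑ i, ∑ j, (1/2) * (c i j * θ i * θ j * (t i - t j)^2)
      = ∑ i, ∑ j, (u i * (E i j:ℝ) * (θ j - u j)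
          - t i * (1 - t i) * θ i * ((E i j : ℝ) * θ j)
          - (1/2) * (c i j * θ i * θ j * (t i - t j)^2)) := by
    rw [← Finset.sum_sub_distrib, ← Finset.sum_sub_distrib]
    apply Finset.sum_congr rfl; intro i _
    rw [← Finset.sum_sub_distrib, ← Finset.sum_sub_distrib]
  rw [hcomb, ← hswap]
  apply Finset.sum_congr rfl; intro i _
  apply Finset.sum_congr rfl; intro j _
  rw [hu i, hu j]
  by_cases h : i = j
  · subst h
    simp only [hc, if_pos rfl, hdiag i]
    push_cast
    ring
  · have hE : c i j = (E i j : ℝ) := by simp only [hc, if_neg h]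
    rw [← hE]
    ring

end Decomp51

open Decomp51

/-- The underlying simple graph of a quiver with matrix `E`: `i` is adjacent to `j`
iff `i ≠ j` and the `(i,j)` entry is negative (for symmetric `E` this is the usual
adjacency `E i j < 0`). -/
def quivGraph {Q0 : Type*} (E : Q0 → Q0 → ℤ) : SimpleGraph Q0 where
  Adj i j := i ≠ j ∧ (E i j < 0 ∨ E j i < 0)
  symm := ⟨fun _ _ h => ⟨h.1.symm, h.2.symm⟩⟩
  loopless := ⟨fun _ h => h.1 rfl⟩

/-- The subgraph of `quivGraph E` induced on the support of `δ`. -/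
def suppGraph {Q0 : Type*} (E : Q0 → Q0 → ℤ) (δ : Q0 → ℕ) :
    SimpleGraph {i : Q0 // δ i ≠ 0} :=
  (quivGraph E).comap Subtype.val

/-- Condition (∗): `⟨e_i, δ⟩ < 0` for every vertex `i`, and any two connected components
of the subgraph induced on `supp δ` are at distance at most one, i.e. either they are
joined by an edge or some vertex is adjacent to both. -/
def condStar {Q0 : Type*} [Fintype Q0] [DecidableEq Q0]
    (E : Q0 → Q0 → ℤ) (δ : Q0 → ℕ) : Prop :=
  (∀ i : Q0, bform E (Pi.single i 1) (nvec δ) < 0) ∧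
    ∀ u v : {i : Q0 // δ i ≠ 0},
      (suppGraph E δ).Reachable u v ∨
        ∃ x y : {i : Q0 // δ i ≠ 0},
          (suppGraph E δ).Reachable u x ∧ (suppGraph E δ).Reachable v y ∧
            ((quivGraph E).Adj x.1 y.1 ∨
              ∃ w : Q0, (quivGraph E).Adj w x.1 ∧ (quivGraph E).Adj w y.1)

/-- Weak condition (∗): as `condStar` but with `⟨e_i, δ⟩ ≤ 0`. -/
def condStarWeak {Q0 : Type*} [Fintype Q0] [DecidableEq Q0]
    (E : Q0 → Q0 → ℤ) (δ : Q0 → ℕ) : Prop :=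
  (∀ i : Q0, bform E (Pi.single i 1) (nvec δ) ≤ 0) ∧
    ∀ u v : {i : Q0 // δ i ≠  0},
      (suppGraph E δ).Reachable u v ∨
        ∃ x y : {i : Q0 // δ i ≠ 0},
          (suppGraph E δ).Reachable u x ∧ (suppGraph E δ).Reachable v y ∧
            ((quivGraph E).Adj x.1 y.1 ∨
              ∃ w : Q0, (quivGraph E).Adj w x.1 ∧ (quivGraph E).Adj w y.1)

set_option maxHeartbeats 2000000 in
/-- Lemma 5.1: let `C` be the Cartan matrix of a quiver without loops, `δ` satisfy weak (∗)
for `C`, `supp d ∪ supp δ = Q0` and `(d + nδ, e_i) < 0` for all `i` and `n`. Then for every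
real `M > 0` and `ε > 0` and all large `n`: any decomposition `d + nδ = d^1 + … + d^k` into
nonzero dimension vectors with `(τ,τ) - Σ_j (d^j, d^j) > -M` contains a part `d^j` with
`d^j ≥ (n - ε√n) δ` componentwise, and moreover `(δ, (d + nδ) - d^j) = 0`. -/
theorem decomp_has_large_part
    {Q0 : Type*} [Fintype Q0] [DecidableEq Q0] [Nonempty Q0]
    (C : Q0 → Q0 → ℤ) (hsymm : ∀ i j, C i j = C j i)
    (hdiag : ∀ i, C i i = 2) (hoff : ∀ i j, i ≠ j → C i j ≤ 0)
    (δ : Q0 → ℕ) (hδ : condStarWeak C δ)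
    (d : Q0 → ℕ) (hsupp : ∀ i, d i ≠ 0 ∨ δ i ≠ 0)
    (hneg : ∀ (n : ℕ) (i : Q0),
      bform C (fun j => (d j : ℤ) + n * δ j) (Pi.single i 1) < 0) :
    ∀ M : ℝ, 0 < M → ∀ ε : ℝ, 0 < ε → ∃ N : ℕ, ∀ n ≥ N,
      ∀ k : ℕ, ∀ ds : Fin k → Q0 → ℕ,
        (∀ a, ds a ≠ 0) → (∀ i, ∑ a, ds a i = d i + n * δ i) →
        (((bform C (fun j => (d j : ℤ) + n * δ j) (fun j => (d j : ℤ) + n * δ j) -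
            ∑ a, bform C (nvec (ds a)) (nvec (ds a)) : ℤ) : ℝ) > -M) →
        ∃ a : Fin k,
          (∀ i, ((n : ℝ) - ε * Real.sqrt n) * (δ i : ℝ) ≤ (ds a i : ℝ)) ∧
            bform C (nvec δ) (fun i => ((d i : ℤ) + n * δ i) - ds a i) = 0 := by

  classical
  intro M hM ε hε
  -- choose N via eventual conditions
  have hcast : Filter.Tendsto (fun n : ℕ => (n : ℝ)) Filter.atTop Filter.atTop :=
    tendsto_natCast_atTop_atTop
  have h1 : ∀ᶠ n : ℕ in Filter.atTop, 1 ≤ n := Filter.eventually_ge_atTop 1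
  have h2 : ∀ᶠ n : ℕ in Filter.atTop, 16 * M < (n : ℝ) := hcast.eventually_gt_atTop _
  have h3 : ∀ᶠ n : ℕ in Filter.atTop, (2 * M / ε) ^ 2 ≤ (n : ℝ) := hcast.eventually_ge_atTop _
  have h4 : ∀ᶠ n : ℕ in Filter.atTop, ∀ i : Q0,
      2 * M + ((bform C (Pi.single i 1) (nvec d) : ℤ) : ℝ) < (n : ℝ) :=
    Filter.eventually_all.2 (fun i => hcast.eventually_gt_atTop _)
  have h5 : ∀ᶠ n : ℕ in Filter.atTop, ∀ i : Q0,
      M * ((d i : ℕ) : ℝ) + ((bform C (Pi.single i 1) (nvec d) : ℤ) : ℝ) < (n : ℝ) :=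
    Filter.eventually_all.2 (fun i => hcast.eventually_gt_atTop _)
  obtain ⟨N, hN⟩ := Filter.eventually_atTop.1 ((((h1.and h2).and h3).and h4).and h5)
  refine ⟨N, ?_⟩
  intro n hn k ds hds0 hdsum hdefect
  obtain ⟨⟨⟨⟨hn1, hn16⟩, hnε⟩, hn4⟩, hn5⟩ := hN n hn
  have hn0 : (0:ℝ) < (n:ℝ) := by
    have : (1:ℝ) ≤ (n:ℝ) := by exact_mod_cast hn1
    linarith
  by_cases hΔe : ∀ i, δ i = 0
  · -- trivial case : δ = 0
    have hk : k ≠ 0 := by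
      intro hk0
      obtain ⟨i₀⟩ := ‹Nonempty Q0›
      have hd : d i₀ ≠ 0 := by
        rcases hsupp i₀ with h | h
        · exact h
        · exact absurd (hΔe i₀) h
      have := hdsum i₀
      subst hk0
      simp [hΔe i₀] at this
      exact hd this.symm
    refine ⟨⟨0, Nat.pos_of_ne_zero hk⟩, ?_, ?_⟩
    · intro i
      rw [hΔe i]
      simp
    · have hnv : nvec δ = fun _ => (0:ℤ) := by
        funext i; simp [nvec, hΔe i]
      simp [bform, hnv]
  · push_neg at hΔe
    obtain ⟨i₀, hi₀⟩ := hΔe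
    -- main case: supp δ nonempty
    set τZ : Q0 → ℤ := fun j => (d j : ℤ) + n * δ j with hτZ
    clear_value τZ
    set θ : Q0 → ℝ := fun i => (d i : ℝ) + n * (δ i : ℝ) with hθdef
    clear_value θ
    have hθcast : ∀ i, ((τZ i : ℤ) : ℝ) = θ i := by intro i; simp [hτZ, hθdef]
    have hθpos : ∀ i, 1 ≤ θ i := by
      intro i
      have hd0 : (0:ℝ) ≤ (d i : ℝ) := Nat.cast_nonneg _
      have hδ0 : (0:ℝ) ≤ (δ i : ℝ) := Nat.cast_nonneg _
      rcases hsupp i with h | h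
      · have : (1:ℝ) ≤ (d i : ℝ) := by exact_mod_cast Nat.one_le_iff_ne_zero.2 h
        have : (0:ℝ) ≤ (n:ℝ) * (δ i : ℝ) := by positivity
        simp only [hθdef]; linarith [‹(1:ℝ) ≤ (d i : ℝ)›]
      · have h1 : (1:ℝ) ≤ (δ i : ℝ) := by exact_mod_cast Nat.one_le_iff_ne_zero.2 h
        have h2 : (1:ℝ) ≤ (n:ℝ) := by exact_mod_cast hn1
        have : (1:ℝ) ≤ (n:ℝ) * (δ i : ℝ) := by nlinarith
        simp only [hθdef]; linarith
    have hθ0 : ∀ i, 0 < θ i := fun i => lt_of_lt_of_le one_pos (hθpos i)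
    have hθn : ∀ i, δ i ≠ 0 → (n:ℝ) ≤ θ i := by
      intro i h
      have h1 : (1:ℝ) ≤ (δ i : ℝ) := by exact_mod_cast Nat.one_le_iff_ne_zero.2 h
      have hd0 : (0:ℝ) ≤ (d i : ℝ) := Nat.cast_nonneg _
      simp only [hθdef]
      nlinarith
    have hθnδ : ∀ i, (n:ℝ) * (δ i : ℝ) ≤ θ i := by
      intro i
      have hd0 : (0:ℝ) ≤ (d i : ℝ) := Nat.cast_nonneg _
      simp only [hθdef]; linarith
    set t : Fin k → Q0 → ℝ := fun a i => (ds a i : ℝ) / θ i with htdef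
    clear_value t
    have ht0 : ∀ a i, 0 ≤ t a i := by
      intro a i
      rw [htdef]
      exact div_nonneg (Nat.cast_nonneg _) (le_of_lt (hθ0 i))
    have hdssum : ∀ i, ∑ a, ((ds a i : ℕ) : ℝ) = θ i := by
      intro i
      have h := hdsum i
      have h2 : ((∑ a, ds a i : ℕ) : ℝ) = θ i := by
        rw [h]; simp [hθdef]
      rw [← h2]
      exact_mod_cast rfl
    have htsum : ∀ i, ∑ a, t a i = 1 := by
      intro i
      simp only [htdef]
      rw [← Finset.sum_div, hdssum i, div_self (ne_of_gt (hθ0 i))]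
    have hdsle : ∀ a i, ((ds a i : ℕ) : ℝ) ≤ θ i := by
      intro a i
      rw [← hdssum i]
      exact Finset.single_le_sum (f := fun b => ((ds b i : ℕ) : ℝ))
        (fun b _ => Nat.cast_nonneg _) (Finset.mem_univ a)
    have ht1 : ∀ a i, t a i ≤ 1 := by
      intro a i
      rw [htdef]
      exact (div_le_one (hθ0 i)).2 (hdsle a i)
    have htθ : ∀ a i, t a i * θ i = ((ds a i : ℕ) : ℝ) := by
      intro a i
      simp only [htdef]
      rw [div_mul_cancel₀]
      exact ne_of_gt (hθ0 i)
    -- hBi : the form of e_i against θ is ≤ -1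
    have hBi : ∀ i, bformR C (Pi.single i 1) θ ≤ -1 := by
      intro i
      have h := hneg n i
      rw [← hτZ] at h
      rw [bform_single_right] at h
      have h' : (∑ j, τZ j * C j i) ≤ -1 := by omega
      have hEq : bformR C (Pi.single i 1) θ = ((∑ j, τZ j * C j i : ℤ) : ℝ) := by
        rw [bformR_single_left]
        push_cast
        apply Finset.sum_congr rfl
        intro j _
        rw [hsymm i j, hθcast j]
        ring
      rw [hEq]
      exact_mod_cast h'
    -- the total defect
    set uR : Fin k → Q0 → ℝ := fun a i => ((ds a i : ℕ) : ℝ) with huRdef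
    clear_value uR
    have huRa : ∀ (a : Fin k) (i : Q0), uR a i = ((ds a i : ℕ) : ℝ) := by
      intro a i; rw [huRdef]
    have hRsum : -M < ∑ a, bformR C (uR a) (fun i => θ i - uR a i) := by
      have e1 : ∀ a, bformR C (uR a) (fun i => θ i - uR a i)
          = bformR C (uR a) θ - bformR C (uR a) (uR a) := fun a => bformR_sub_right C _ _ _
      have e2 : ∑ a, bformR C (uR a) θ = bformR C θ θ := by
        rw [bformR_sum_left]
        congr 1
        funext i
        rw [show (∑ a, uR a i) = ∑ a, ((ds a i : ℕ) : ℝ) from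
          Finset.sum_congr rfl (fun a _ => huRa a i)]
        exact hdssum i
      have e3 : ∑ a, bformR C (uR a) (fun i => θ i - uR a i)
          = bformR C θ θ - ∑ a, bformR C (uR a) (uR a) := by
        rw [Finset.sum_congr rfl (fun a _ => e1 a), Finset.sum_sub_distrib, e2]
      rw [e3]
      have hc1 : ((bform C τZ τZ : ℤ) : ℝ) = bformR C θ θ := by
        rw [bform_cast]
        congr 1 <;> funext i <;> exact hθcast i
      have hc2 : ∀ a, ((bform C (nvec (ds a)) (nvec (ds a)) : ℤ) : ℝ)
          = bformR C (uR a) (uR a) := by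
        intro a
        rw [bform_cast]
        congr 1 <;> funext i <;> simp [huRa, nvec]
      have goal' : -M < ((bform C τZ τZ : ℤ) : ℝ)
          - ∑ a, ((bform C (nvec (ds a)) (nvec (ds a)) : ℤ) : ℝ) := by
        have hd2 := hdefect
        push_cast at hd2 ⊢
        linarith [hd2]
      rw [hc1] at goal'
      rw [Finset.sum_congr rfl (fun a _ => hc2 a)] at goal'
      exact goal' 
    -- the pieces A and Ee
    set A : Fin k → Q0 → ℝ :=
      fun a i => t a i * (1 - t a i) * θ i * bformR C (Pi.single i 1) θ with hAdef
    clear_value A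
    set Ee : Fin k → Q0 → Q0 → ℝ :=
      fun a i j => (if i = j then (0:ℝ) else (C i j : ℝ)) * θ i * θ j * (t a i - t a j)^2
      with hEedef
    clear_value Ee
    have hterm_eq : ∀ a, bformR C (uR a) (fun i => θ i - uR a i)
        = (∑ i, A a i) + (1/2) * ∑ i, ∑ j, Ee a i j := by
      intro a
      simp only [hAdef, hEedef]
      exact key_id C hsymm hdiag θ (t a) (uR a)
        (fun i => (huRa a i).trans (htθ a i).symm)
    have hA_nonpos : ∀ a i, A a i ≤ 0 := by
      intro a i
      have h1 : 0 ≤ t a i * (1 - t a i) * θ i :=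
        mul_nonneg (mul_nonneg (ht0 a i) (by linarith [ht1 a i])) (le_of_lt (hθ0 i))
      have h2 : bformR C (Pi.single i 1) θ ≤ 0 := le_trans (hBi i) (by norm_num)
      simp only [hAdef]
      exact mul_nonpos_of_nonneg_of_nonpos h1 h2
    have hEe_nonpos : ∀ a i j, Ee a i j ≤ 0 := by
      intro a i j
      have hcn : (if i = j then (0:ℝ) else (C i j : ℝ)) ≤ 0 := by
        by_cases h : i = j
        · simp [h]
        · rw [if_neg h]
          exact_mod_cast hoff i j h
      have h1 : 0 ≤ θ i * θ j * (t a i - t a j)^2 :=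
        mul_nonneg (mul_nonneg (le_of_lt (hθ0 i)) (le_of_lt (hθ0 j))) (sq_nonneg _)
      simp only [hEedef]
      nlinarith
    have hEe_symm : ∀ a i j, Ee a i j = Ee a j i := by
      intro a i j
      simp only [hEedef]
      by_cases h : i = j
      · subst h; ring
      · rw [if_neg h, if_neg (Ne.symm h), hsymm i j]
        ring
    have hsumA_nonpos : ∀ a, ∑ i, A a i ≤ 0 :=
      fun a => Finset.sum_nonpos (fun i _ => hA_nonpos a i)
    have hsumEe_nonpos : ∀ a, ∑ i, ∑ j, Ee a i j ≤ 0 :=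
      fun a => Finset.sum_nonpos (fun i _ => Finset.sum_nonpos (fun j _ => hEe_nonpos a i j))
    have hterm_nonpos : ∀ a, bformR C (uR a) (fun i => θ i - uR a i) ≤ 0 := by
      intro a
      rw [hterm_eq a]
      have := hsumA_nonpos a
      have := hsumEe_nonpos a
      linarith
    have hterm_gt : ∀ a, -M < bformR C (uR a) (fun i => θ i - uR a i) := by
      intro a
      have h := sum_nonpos_le (fun b => bformR C (uR b) (fun i => θ i - uR b i))
        (fun b => hterm_nonpos b) a
      calc -M < ∑ b, bformR C (uR b) (fun i => θ i - uR b i) := hRsum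
        _ ≤ _ := h
    have hApiece : ∀ a i, -M < A a i := by
      intro a i
      have h1 : ∑ i', A a i' ≤ A a i := sum_nonpos_le _ (hA_nonpos a) i
      have := hterm_gt a
      rw [hterm_eq a] at this
      have := hsumEe_nonpos a
      linarith
    have hAsum : ∀ i, -M < ∑ a, A a i := by
      intro i
      have h : ∑ a, bformR C (uR a) (fun i' => θ i' - uR a i') ≤ ∑ a, A a i := by
        apply Finset.sum_le_sum
        intro a _
        rw [hterm_eq a]
        have h1 : ∑ i', A a i' ≤ A a i := sum_nonpos_le _ (hA_nonpos a) i
        have := hsumEe_nonpos a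
        linarith
      linarith [hRsum]
    have hEpiece : ∀ a i j, i ≠ j → -M < Ee a i j := by
      intro a i j hij
      have h1 : ∑ i', ∑ j', Ee a i' j' ≤ (∑ j', Ee a i j') + (∑ j', Ee a j j') :=
        sum_nonpos_le_pair _ (fun x => Finset.sum_nonpos (fun y _ => hEe_nonpos a x y)) i j hij
      have h2 : ∑ j', Ee a i j' ≤ Ee a i j := sum_nonpos_le _ (fun y => hEe_nonpos a i y) j
      have h3 : ∑ j', Ee a j j' ≤ Ee a j i := sum_nonpos_le _ (fun y => hEe_nonpos a j y) i
      have h4 := hterm_gt a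
      rw [hterm_eq a] at h4
      have h5 := hsumA_nonpos a
      have h6 : Ee a j i = Ee a i j := hEe_symm a j i
      linarith
    -- usable bounds
    have hF1 : ∀ a i, t a i * (1 - t a i) * θ i < M := by
      intro a i
      have h := hApiece a i
      have hx : 0 ≤ t a i * (1 - t a i) * θ i :=
        mul_nonneg (mul_nonneg (ht0 a i) (by linarith [ht1 a i])) (le_of_lt (hθ0 i))
      have hb := hBi i
      simp only [hAdef] at h
      nlinarith [mul_nonneg hx (show (0:ℝ) ≤ -(bformR C (Pi.single i 1) θ) - 1 by linarith)]
    have hF1sum : ∀ i, ∑ a, t a i * (1 - t a i) * θ i < M := by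
      intro i
      have h : ∑ a, t a i * (1 - t a i) * θ i ≤ ∑ a, -A a i := by
        apply Finset.sum_le_sum
        intro a _
        have hx : 0 ≤ t a i * (1 - t a i) * θ i :=
          mul_nonneg (mul_nonneg (ht0 a i) (by linarith [ht1 a i])) (le_of_lt (hθ0 i))
        have hb := hBi i
        simp only [hAdef]
        nlinarith [mul_nonneg hx (show (0:ℝ) ≤ -(bformR C (Pi.single i 1) θ) - 1 by linarith)]
      have h2 : ∑ a, -A a i = -∑ a, A a i := by rw [Finset.sum_neg_distrib]
      have := hAsum i
      linarith
    have hF2 : ∀ a i j, i ≠ j → C i j < 0 → θ i * θ j * (t a i - t a j)^2 < M := by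
      intro a i j hij hC
      have h := hEpiece a i j hij
      simp only [hEedef, if_neg hij] at h
      have hC1 : (C i j : ℝ) ≤ -1 := by
        have : C i j ≤ -1 := by omega
        exact_mod_cast this
      have h1 : 0 ≤ θ i * θ j * (t a i - t a j)^2 :=
        mul_nonneg (mul_nonneg (le_of_lt (hθ0 i)) (le_of_lt (hθ0 j))) (sq_nonneg _)
      nlinarith [mul_nonneg h1 (show (0:ℝ) ≤ -(C i j : ℝ) - 1 by linarith)]
    -- dominant parts
    have hkpos : 0 < k := by
      rcases Nat.eq_zero_or_pos k with h | h
      · exfalso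
        have hts := htsum i₀
        subst h
        simp at hts
      · exact h
    have hM8 : 2*M/(n:ℝ) < 1/8 := by
      rw [div_lt_iff₀ hn0]
      linarith
    have hbig : ∀ i, δ i ≠ 0 → ∃ a, 1/2 < t a i := by
      intro i hi
      by_contra hcon
      push_neg at hcon
      have e : ∑ a, t a i * ((1/2) * θ i) = (1/2) * θ i := by
        rw [← Finset.sum_mul, htsum i, one_mul]
      have hle : ∑ a, t a i * ((1/2) * θ i) ≤ ∑ a, t a i * (1 - t a i) * θ i := by
        apply Finset.sum_le_sum
        intro a _
        nlinarith [mul_nonneg (mul_nonneg (ht0 a i)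
          (show (0:ℝ) ≤ 1/2 - t a i by linarith [hcon a])) (le_of_lt (hθ0 i))]
      have hf := hF1sum i
      have hni := hθn i hi
      rw [e] at hle
      linarith
    set part : Q0 → Fin k := fun i => if h : ∃ a, 1/2 < t a i then h.choose else ⟨0, hkpos⟩
      with hpartdef
    clear_value part
    have hpart : ∀ i, δ i ≠ 0 → 1/2 < t (part i) i := by
      intro i hi
      have h := hbig i hi
      simp only [hpartdef, dif_pos h]
      exact h.choose_spec
    have hpair : ∀ (i : Q0) (a b : Fin k), a ≠ b → t a i + t b i ≤ 1 := by
      intro i a b hab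
      rw [← htsum i]
      exact add_le_sum_pair _ (fun x => ht0 x i) a b hab
    have huniq : ∀ (i : Q0) (a : Fin k), δ i ≠ 0 → 1/2 < t a i → a = part i := by
      intro i a hi ha
      by_contra hne
      have h1 := hpair i a (part i) hne
      have h2 := hpart i hi
      linarith
    have hstrong : ∀ i, δ i ≠ 0 → 1 - 2*M/(n:ℝ) < t (part i) i := by
      intro i hi
      have h := hF1 (part i) i
      have h2 := hpart i hi
      have hni := hθn i hi
      have h3 := ht1 (part i) i
      have h4 : (n:ℝ) ≤ 2 * (t (part i) i * θ i) := by
        nlinarith [mul_nonneg (show (0:ℝ) ≤ 2 * t (part i) i - 1 by linarith)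
          (le_of_lt (hθ0 i))]
      have key : (1 - t (part i) i) * (n:ℝ) ≤ 2 * (t (part i) i * (1 - t (part i) i) * θ i) := by
        have h5 := mul_le_mul_of_nonneg_left h4 (show (0:ℝ) ≤ 1 - t (part i) i by linarith)
        nlinarith [h5]
      have h6 : (1 - t (part i) i) * (n:ℝ) < 2*M := by linarith
      have h7 : 1 - t (part i) i < 2*M/(n:ℝ) := by
        rw [lt_div_iff₀ hn0]
        linarith
      linarith
    have hsmall : ∀ (i : Q0) (b : Fin k), δ i ≠ 0 → b ≠ part i → t b i < 2*M/(n:ℝ) := by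
      intro i b hi hb
      have h1 := hpair i b (part i) hb
      have h2 := hstrong i hi
      linarith
    have habs : ∀ (a : Fin k) (x y : Q0), δ x ≠ 0 → (quivGraph C).Adj x y →
        (t a x - t a y)^2 < 1/16 := by
      intro a x y hx hadj
      obtain ⟨hne, hor⟩ := hadj
      have hC : C x y < 0 := by
        rcases hor with h | h
        · exact h
        · rw [hsymm x y]; exact h
      have h := hF2 a x y hne hC
      have h2 : (n:ℝ) ≤ θ x * θ y := by
        nlinarith [hθn x hx, hθpos y, mul_nonneg (le_of_lt (hθ0 x))
          (show (0:ℝ) ≤ θ y - 1 by linarith [hθpos y])]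
      have h1 : (n:ℝ) * (t a x - t a y)^2 ≤ θ x * θ y * (t a x - t a y)^2 :=
        mul_le_mul_of_nonneg_right h2 (sq_nonneg _)
      nlinarith [sq_nonneg (t a x - t a y)]
    have hprop : ∀ x y : Q0, δ x ≠ 0 → δ y ≠ 0 → (quivGraph C).Adj x y →
        part x = part y := by
      intro x y hx hy hadj
      have h1 := habs (part x) x y hx hadj
      have h2 := hstrong x hx
      have h3 : 1/2 < t (part x) y := by
        nlinarith [sq_nonneg (t (part x) x - t (part x) y - 3/8)]
      exact huniq y (part x) hy h3
    have hcommon : ∀ x y w : Q0, δ x ≠ 0 → δ y ≠ 0 →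
        (quivGraph C).Adj w x → (quivGraph C).Adj w y → part x = part y := by
      intro x y w hx hy hwx hwy
      have h1 := habs (part x) x w hx hwx.symm
      have h2 := hstrong x hx
      have h3 : 1/2 < t (part x) w := by
        nlinarith [sq_nonneg (t (part x) x - t (part x) w - 3/8)]
      have h4 := habs (part y) y w hy hwy.symm
      have h5 := hstrong y hy
      have h6 : 1/2 < t (part y) w := by
        nlinarith [sq_nonneg (t (part y) y - t (part y) w - 3/8)]
      by_contra hne
      have h7 := hpair w (part x) (part y) hne
      linarith
    have hreach : ∀ u v : {i : Q0 // δ i ≠ 0}, (suppGraph C δ).Reachable u v →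
        part u.1 = part v.1 := by
      intro u v hr
      obtain ⟨p⟩ := hr
      induction p with
      | nil => rfl
      | cons h p ih =>
        rename_i u' w' v' 
        exact (hprop u'.1 w'.1 u'.2 w'.2 h).trans ih
    have hall : ∀ i, δ i ≠ 0 → part i = part i₀ := by
      intro i hi
      rcases hδ.2 ⟨i, hi⟩ ⟨i₀, hi₀⟩ with hr | ⟨x, y, hux, hvy, hxy⟩
      · exact hreach _ _ hr
      · have e1 : part i = part x.1 := hreach _ _ hux
        have e2 : part i₀ = part y.1 := hreach _ _ hvy
        have e3 : part x.1 = part y.1 := by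
          rcases hxy with ha | ⟨w, hwx, hwy⟩
          · exact hprop x.1 y.1 x.2 y.2 ha
          · exact hcommon x.1 y.1 w x.2 y.2 hwx hwy
        rw [e1, e3, e2]
    refine ⟨part i₀, ?_, ?_⟩
    · -- size estimate
      intro i
      by_cases hi : δ i = 0
      · rw [hi]
        simp
      · have hpi : part i = part i₀ := hall i hi
        have hst := hstrong i hi
        rw [hpi] at hst
        have hδ1 : (0:ℝ) ≤ (δ i : ℝ) := Nat.cast_nonneg _
        have hεs : 2*M ≤ ε * Real.sqrt (n:ℝ) := by
          have hs : 2*M/ε ≤ Real.sqrt (n:ℝ) := by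
            rw [show (2*M/ε : ℝ) = Real.sqrt ((2*M/ε)^2) from
              (Real.sqrt_sq (by positivity)).symm]
            exact Real.sqrt_le_sqrt hnε
          calc 2*M = ε * (2*M/ε) := by field_simp
            _ ≤ ε * Real.sqrt (n:ℝ) := mul_le_mul_of_nonneg_left hs (le_of_lt hε)
        have h1 : ((n:ℝ) - ε*Real.sqrt (n:ℝ)) * (δ i : ℝ) ≤ ((n:ℝ) - 2*M) * (δ i : ℝ) :=
          mul_le_mul_of_nonneg_right (by linarith) hδ1
        have h2 : ((n:ℝ) - 2*M) * (δ i : ℝ) ≤ (1 - 2*M/(n:ℝ)) * θ i := by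
          have e : ((n:ℝ) - 2*M) * (δ i : ℝ) = (1 - 2*M/(n:ℝ)) * ((n:ℝ)*(δ i : ℝ)) := by
            field_simp
          have hf : (0:ℝ) ≤ 1 - 2*M/(n:ℝ) := by linarith
          rw [e]
          exact mul_le_mul_of_nonneg_left (hθnδ i) hf
        have h3 : (1 - 2*M/(n:ℝ)) * θ i ≤ t (part i₀) i * θ i :=
          mul_le_mul_of_nonneg_right (le_of_lt hst) (le_of_lt (hθ0 i))
        have h4 := htθ (part i₀) i
        calc ((n:ℝ) - ε*Real.sqrt (n:ℝ)) * (δ i : ℝ) ≤ (1 - 2*M/(n:ℝ)) * θ i := le_trans h1 h2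
          _ ≤ t (part i₀) i * θ i := h3
          _ = ((ds (part i₀) i : ℕ) : ℝ) := h4
    · -- orthogonality
      rw [show (fun i => ((d i : ℤ) + n * δ i) - ds (part i₀) i)
        = (fun i => τZ i - (ds (part i₀) i : ℤ)) from by funext i; simp only [hτZ]]
      rw [bform_expand]
      apply Finset.sum_eq_zero
      intro i _
      have hμle : bform C (nvec δ) (Pi.single i 1) ≤ 0 := by
        rw [bform_symm C hsymm]
        exact hδ.1 i
      rcases eq_or_lt_of_le hμle with hμ0 | hμneg
      · rw [hμ0, zero_mul]
      · -- μ < 0 : show the coefficient τZ i - ds (part i₀) i vanishes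
        suffices hzero : τZ i - (ds (part i₀) i : ℤ) = 0 by
          rw [hzero, mul_zero]
        -- basic split of the form at vertex i
        have hsplit : bformR C (Pi.single i 1) θ
            = ((bform C (Pi.single i 1) (nvec d) : ℤ) : ℝ)
              + (n:ℝ) * ((bform C (nvec δ) (Pi.single i 1) : ℤ) : ℝ) := by
          rw [bformR_single_left, bform_single_left, bform_single_right]
          push_cast
          rw [Finset.mul_sum, ← Finset.sum_add_distrib]
          apply Finset.sum_congr rfl
          intro j _
          rw [hθdef]
          simp only [nvec]
          push_cast
          rw [hsymm j i]
          ring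
        have hμR : ((bform C (nvec δ) (Pi.single i 1) : ℤ) : ℝ) ≤ -1 := by
          have : bform C (nvec δ) (Pi.single i 1) ≤ -1 := by omega
          exact_mod_cast this
        have hBθn : bformR C (Pi.single i 1) θ
            ≤ ((bform C (Pi.single i 1) (nvec d) : ℤ) : ℝ) - (n:ℝ) := by
          rw [hsplit]
          nlinarith [hn0, hμR]
        -- every other part vanishes at i
        have hvanish : ∀ b : Fin k, b ≠ part i₀ → ds b i = 0 := by
          intro b hb
          by_contra hcontra
          have hbge : (1:ℝ) ≤ ((ds b i : ℕ) : ℝ) := by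
            exact_mod_cast Nat.one_le_iff_ne_zero.2 hcontra
          by_cases hδi : δ i = 0
          · -- vertex outside the support of δ
            have hθd : θ i = ((d i : ℕ) : ℝ) := by rw [hθdef]; simp [hδi]
            -- find a support vertex j adjacent to i
            have hμ' := hμneg
            rw [bform_single_right] at hμ'
            have hex : ∃ j, nvec δ j * C j i < 0 := by
              by_contra hxx
              push_neg at hxx
              have h0 : (0:ℤ) ≤ ∑ j, nvec δ j * C j i :=
                Finset.sum_nonneg (fun j _ => hxx j)
              linarith
            obtain ⟨j, hj⟩ := hex
            have hδj : δ j ≠ 0 := by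
              intro h0
              simp [nvec, h0] at hj
            have hCji : C j i < 0 := by
              by_contra hcc
              push_neg at hcc
              have : (0:ℤ) ≤ nvec δ j * C j i :=
                mul_nonneg (by simp [nvec]) hcc
              linarith
            have hij : i ≠ j := by
              intro h
              rw [← h] at hδj
              exact hδj hδi
            have hCij : C i j < 0 := by rw [hsymm i j]; exact hCji
            have hle' : ds b i ≤ d i + n * δ i := by
              rw [← hdsum i]
              exact Finset.single_le_sum (f := fun a => ds a i)
                (fun _ _ => Nat.zero_le _) (Finset.mem_univ b)
            rcases eq_or_lt_of_le hle' with heq | hlt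
            · -- part b swallows the whole vertex i
              have ht1b : t b i = 1 := by
                have hcast : ((ds b i : ℕ) : ℝ) = θ i := by
                  rw [heq, hθdef]
                  push_cast
                  simp
                rw [htdef]
                simp only
                rw [hcast, div_self (ne_of_gt (hθ0 i))]
              have hbnej : b ≠ part j := by
                rw [hall j hδj]
                exact hb
              have hsm := hsmall j b hδj hbnej
              have hf2 := hF2 b i j hij hCij
              have hsq : (49:ℝ)/64 ≤ (t b i - t b j)^2 := by
                rw [ht1b]
                nlinarith [hsm, ht0 b j, hM8]
              have hq1 : (n:ℝ) * (49/64) ≤ θ j * (t b i - t b j)^2 :=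
                mul_le_mul (hθn j hδj) hsq (by norm_num) (le_of_lt (hθ0 j))
              have hq2 : θ j * (t b i - t b j)^2 ≤ θ i * (θ j * (t b i - t b j)^2) :=
                le_mul_of_one_le_left
                  (mul_nonneg (le_of_lt (hθ0 j)) (sq_nonneg _)) (hθpos i)
              have hq3 : θ i * (θ j * (t b i - t b j)^2) = θ i * θ j * (t b i - t b j)^2 := by
                ring
              linarith
            · -- part b does not swallow the whole vertex i
              have hds2 : ((ds b i : ℕ) : ℝ) + 1 ≤ θ i := by
                have : ((ds b i : ℕ) : ℝ) + 1 ≤ ((d i + n * δ i : ℕ) : ℝ) := by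
                  exact_mod_cast hlt
                rw [hθdef]
                push_cast
                push_cast at this
                linarith
              have hXθ : (1:ℝ) ≤ (t b i * (1 - t b i) * θ i) * θ i := by
                have e : (t b i * (1 - t b i) * θ i) * θ i
                    = (t b i * θ i) * ((1 - t b i) * θ i) := by ring
                have e2 : (1 - t b i) * θ i = θ i - ((ds b i : ℕ) : ℝ) := by
                  rw [sub_mul, one_mul, htθ]
                rw [e, htθ, e2]
                nlinarith [hbge, hds2]
              have hA := hApiece b i
              simp only [hAdef] at hA
              have hXnn : 0 ≤ t b i * (1 - t b i) * θ i :=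
                mul_nonneg (mul_nonneg (ht0 b i) (by linarith [ht1 b i]))
                  (le_of_lt (hθ0 i))
              have h6 : t b i * (1 - t b i) * θ i
                  * (((bform C (Pi.single i 1) (nvec d) : ℤ) : ℝ) - (n:ℝ)) ≥
                  t b i * (1 - t b i) * θ i * bformR C (Pi.single i 1) θ :=
                mul_le_mul_of_nonneg_left hBθn hXnn
              -- so X * (n - Bd) < M
              have h7 : t b i * (1 - t b i) * θ i
                  * ((n:ℝ) - ((bform C (Pi.single i 1) (nvec d) : ℤ) : ℝ)) < M := by
                nlinarith [hA, h6]
              have hn5i := hn5 i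
              have hnBd : (0:ℝ) < (n:ℝ) - ((bform C (Pi.single i 1) (nvec d) : ℤ) : ℝ) := by
                have : (0:ℝ) ≤ M * ((d i : ℕ) : ℝ) :=
                  mul_nonneg (le_of_lt hM) (Nat.cast_nonneg _)
                linarith
              have h8 : ((n:ℝ) - ((bform C (Pi.single i 1) (nvec d) : ℤ) : ℝ))
                  ≤ (t b i * (1 - t b i) * θ i
                    * ((n:ℝ) - ((bform C (Pi.single i 1) (nvec d) : ℤ) : ℝ))) * θ i := by
                nlinarith [hXθ, hnBd]
              have h9 : (t b i * (1 - t b i) * θ i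
                    * ((n:ℝ) - ((bform C (Pi.single i 1) (nvec d) : ℤ) : ℝ))) * θ i
                  < M * θ i := mul_lt_mul_of_pos_right h7 (hθ0 i)
              have h10 : ((n:ℝ) - ((bform C (Pi.single i 1) (nvec d) : ℤ) : ℝ)) < M * θ i :=
                lt_of_le_of_lt h8 h9
              rw [hθd] at h10
              linarith
          · -- vertex inside the support of δ
            have hbne : b ≠ part i := by
              rw [hall i hδi]
              exact hb
            have hX : (1/2:ℝ) ≤ t b i * (1 - t b i) * θ i := by
              have h1 : (1:ℝ) ≤ t b i * θ i := by rw [htθ]; exact hbge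
              have h2 : (1/2:ℝ) ≤ 1 - t b i := by
                have hp := hpair i b (part i) hbne
                have hs := hstrong i hδi
                linarith
              calc (1/2:ℝ) = 1 * (1/2) := by ring
                _ ≤ (t b i * θ i) * (1 - t b i) :=
                  mul_le_mul h1 h2 (by norm_num)
                    (mul_nonneg (ht0 b i) (le_of_lt (hθ0 i)))
                _ = t b i * (1 - t b i) * θ i := by ring
            have hA := hApiece b i
            simp only [hAdef] at hA
            have hXnn : 0 ≤ t b i * (1 - t b i) * θ i := by linarith
            have h6 : t b i * (1 - t b i) * θ i
                * (((bform C (Pi.single i 1) (nvec d) : ℤ) : ℝ) - (n:ℝ)) ≥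
                t b i * (1 - t b i) * θ i * bformR C (Pi.single i 1) θ :=
              mul_le_mul_of_nonneg_left hBθn hXnn
            have hn4i := hn4 i
            have hBdn : ((bform C (Pi.single i 1) (nvec d) : ℤ) : ℝ) - (n:ℝ) < -(2*M) := by
              linarith
            have h7 : t b i * (1 - t b i) * θ i
                * (((bform C (Pi.single i 1) (nvec d) : ℤ) : ℝ) - (n:ℝ)) ≤
                (1/2) * (((bform C (Pi.single i 1) (nvec d) : ℤ) : ℝ) - (n:ℝ)) := by
              nlinarith [hX, hBdn, hM]
            linarith
        have hsum_eq : ds (part i₀) i = d i + n * δ i := by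
          rw [← hdsum i]
          symm
          apply Finset.sum_eq_single_of_mem (part i₀) (Finset.mem_univ _)
          intro b _ hb
          exact hvanish b hb
        have : (ds (part i₀) i : ℤ) = τZ i := by
          rw [hτZ]
          simp only
          rw [hsum_eq]
          push_cast
          ring
        omega
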